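/- Let d ≥ 3, w > 0, and let c be the unique positive root of c² + c(2w + d − 2) − 2w = 0. Define r = (d−1)c/(2w+c), q₁ = (2w+c)c/(2w+2c), K = d(2w+c)²/((2w+2c)(d−1)²), and q_m = K·r^m for m ≥ 2. Then q₁ + Σ_{m=2}^∞ q_m = 1. -/

import Mathlib

/-- Let `d ≥ 3`, `w > 0`, and `c` the unique positive root of
`c² + c(2w + d − 2) − 2w = 0`. With `r = (d−1)c/(2w+c)`,
`q₁ = (2w+c)c/(2w+2c)`, `K = d(2w+c)²/((2w+2c)(d−1)²)` and `q_m = K·r^m`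
for `m ≥ 2`, one has `q₁ + Σ_{m=2}^∞ q_m = 1`. -/
theorem stmt_7 (d : ℕ) (hd : 3 ≤ d) (w : ℝ) (hw : 0 < w) (c : ℝ) (hc : 0 < c)
    (hroot : c ^ 2 + c * (2 * w + d - 2) - 2 * w = 0)
    (r q₁ K : ℝ)
    (hr : r = ((d : ℝ) - 1) * c / (2 * w + c))
    (hq₁ : q₁ = (2 * w + c) * c / (2 * w + 2 * c))
    (hK : K = d * (2 * w + c) ^ 2 / ((2 * w + 2 * c) * ((d : ℝ) - 1) ^ 2)) :
    q₁ + ∑' m : ℕ, K * r ^ (m + 2) = 1 := by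
  have hd3 : (3:ℝ) ≤ (d:ℝ) := by exact_mod_cast hd
  have hden : (0:ℝ) < 2 * w + c := by linarith
  have hden2 : (0:ℝ) < 2 * w + 2 * c := by linarith
  have hd1 : (0:ℝ) < (d:ℝ) - 1 := by linarith
  have hr0 : 0 ≤ r := by
    rw [hr]; positivity
  have hr1 : r < 1 := by
    rw [hr, div_lt_one hden]
    nlinarith [sq_nonneg c, mul_pos hw hc]
  have hsum : ∑' m : ℕ, K * r ^ (m + 2) = K * r ^ 2 * (1 - r)⁻¹ := by
    have hg := tsum_geometric_of_lt_one hr0 hr1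
    calc ∑' m : ℕ, K * r ^ (m + 2) = ∑' m : ℕ, (K * r ^ 2) * r ^ m := by
          congr 1; ext m; ring
      _ = (K * r ^ 2) * ∑' m : ℕ, r ^ m := tsum_mul_left
      _ = K * r ^ 2 * (1 - r)⁻¹ := by rw [hg]
  rw [hsum, hq₁, hr, hK]
  have h1r : (1 : ℝ) - ((d : ℝ) - 1) * c / (2 * w + c) ≠ 0 := by
    rw [hr] at hr1; intro h; nlinarith [hr1]
  have hpos : (0:ℝ) < 2 * w + c - ((d:ℝ) - 1) * c := by
    rw [hr, div_lt_one hden] at hr1; linarith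
  have hpos' : 2 * w + c - c * ((d:ℝ) - 1) ≠ 0 := by intro h; apply hpos.ne'; linarith
  field_simp [hpos.ne', hden.ne', hden2.ne', hd1.ne', hpos']
  linear_combination (2*w+2*c) * hroot
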